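/- Let A be an n×n integer matrix with Δ := |det(A)| > 0, let b ∈ ℤⁿ, let P = {x ∈ ℝⁿ : A x ≤ b}, let h₁,…,hₙ be the columns of Δ·A⁻¹, and let c ∈ ℤⁿ satisfy ⟨c, hᵢ⟩ > 0 for every i. Let M = {y ∈ ℤⁿ : y ≥ 0 and b − y ∈ Aℤⁿ}. Then for every τ > 0, ∑_{z ∈ P ∩ ℤⁿ} e^{⟨c,z⟩τ} = e^{⟨c, A⁻¹b⟩ τ} · ∑_{y ∈ M} e^{−⟨c, A⁻¹ y⟩ τ}, where both series converge absolutely. -/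

import Mathlib

open Matrix

private lemma pow_prod_summable : ∀ (n : ℕ) (r : Fin n → ℝ), (∀ i, 0 ≤ r i) → (∀ i, r i < 1) →
    Summable (fun y : Fin n → ℕ => ∏ i, r i ^ y i) := by
  intro n
  induction n with
  | zero =>
    intro r _ _
    haveI : Finite (Fin 0 → ℕ) := Finite.of_subsingleton
    exact Summable.of_finite
  | succ m ih =>
    intro r h0 h1
    rw [← (Fin.consEquiv (fun _ : Fin (m+1) => ℕ)).summable_iff]
    have : ((fun y : Fin (m+1) → ℕ => ∏ i, r i ^ y i) ∘ (Fin.consEquiv (fun _ : Fin (m+1) => ℕ))) =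
        fun p : ℕ × (Fin m → ℕ) =>
          (r 0 ^ p.1) * ∏ i : Fin m, (r i.succ) ^ (p.2 i) := by
      funext p
      simp [Fin.consEquiv, Fin.prod_univ_succ]
    rw [this]
    have hg : Summable (fun k : ℕ => r 0 ^ k) := summable_geometric_of_lt_one (h0 0) (h1 0)
    have hp : Summable (fun q : Fin m → ℕ => ∏ i : Fin m, (r i.succ) ^ (q i)) :=
      ih (fun i => r i.succ) (fun i => h0 _) (fun i => h1 _)
    exact Summable.mul_of_nonneg (f := fun k : ℕ => r 0 ^ k) (g := fun q : Fin m → ℕ => ∏ i : Fin m, (r i.succ) ^ (q i)) hg hp (fun k => pow_nonneg (h0 0) _)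
      (fun q => Finset.prod_nonneg fun i _ => pow_nonneg (h0 _) _)

/-- With `A`, `b`, `P`, `c` as in Statement 1 and
`M = {y ∈ ℤⁿ : y ≥ 0, b − y ∈ Aℤⁿ}`, for every `τ > 0` we have
`∑_{z ∈ P ∩ ℤⁿ} e^{⟨c,z⟩τ} = e^{⟨c,A⁻¹b⟩τ} · ∑_{y ∈ M} e^{−⟨c,A⁻¹y⟩τ}`,
both series converging absolutely. -/
theorem tsum_lattice_points_eq_group_series (n : ℕ) (A : Matrix (Fin n) (Fin n) ℤ)
    (hA : 0 < |A.det|) (b : Fin n → ℤ) (c : Fin n → ℤ)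
    (hc : ∀ i : Fin n, 0 < ∑ j, (c j : ℝ) *
      (((|A.det| : ℝ) • (A.map (Int.cast : ℤ → ℝ))⁻¹) j i))
    (τ : ℝ) (hτ : 0 < τ) :
    Summable (fun z : {z : Fin n → ℤ // ∀ i, A.mulVec z i ≤ b i} =>
      Real.exp ((∑ j, (c j : ℝ) * (z.1 j : ℝ)) * τ)) ∧
    Summable (fun y : {y : Fin n → ℤ //
        (∀ i, 0 ≤ y i) ∧ ∃ z : Fin n → ℤ, b - y = A.mulVec z} =>
      Real.exp (-(∑ j, (c j : ℝ) *
        (A.map (Int.cast : ℤ → ℝ))⁻¹.mulVec (fun i => (y.1 i : ℝ)) j) * τ)) ∧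
    (∑' z : {z : Fin n → ℤ // ∀ i, A.mulVec z i ≤ b i},
        Real.exp ((∑ j, (c j : ℝ) * (z.1 j : ℝ)) * τ)) =
      Real.exp ((∑ j, (c j : ℝ) *
          (A.map (Int.cast : ℤ → ℝ))⁻¹.mulVec (fun i => (b i : ℝ)) j) * τ) *
      ∑' y : {y : Fin n → ℤ //
          (∀ i, 0 ≤ y i) ∧ ∃ z : Fin n → ℤ, b - y = A.mulVec z},
        Real.exp (-(∑ j, (c j : ℝ) *
          (A.map (Int.cast : ℤ → ℝ))⁻¹.mulVec (fun i => (y.1 i : ℝ)) j) * τ) := by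
  classical
  set B := (A.map (Int.cast : ℤ → ℝ))⁻¹ with hBdef
  have hΔ : (0 : ℝ) < (|A.det| : ℝ) := by exact_mod_cast hA
  have hdetR : ((A.map (Int.cast : ℤ → ℝ)).det) ≠ 0 := by
    have h1 : (A.map (Int.cast : ℤ → ℝ)).det = ((A.det : ℤ) : ℝ) := by
      rw [show A.map (Int.cast : ℤ → ℝ) = (Int.castRingHom ℝ).mapMatrix A from rfl,
        ← RingHom.map_det]
      rfl
    rw [h1]
    intro h
    have : A.det = 0 := by exact_mod_cast h
    simp [this] at hA
  have hu : IsUnit (A.map (Int.cast : ℤ → ℝ)).det := isUnit_iff_ne_zero.2 hdetR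
  have hBA : B * (A.map (Int.cast : ℤ → ℝ)) = 1 := Matrix.nonsing_inv_mul _ hu
  -- casting mulVec
  have castVec : ∀ v : Fin n → ℤ,
      (A.map (Int.cast : ℤ → ℝ)).mulVec (fun i => (v i : ℝ))
        = fun j => ((A.mulVec v j : ℤ) : ℝ) := by
    intro v; funext j
    simp [Matrix.mulVec, dotProduct, Matrix.map_apply]
  have recov : ∀ v : Fin n → ℤ,
      B.mulVec (fun i => ((A.mulVec v i : ℤ) : ℝ)) = fun i => (v i : ℝ) := by
    intro v
    rw [← castVec v, Matrix.mulVec_mulVec, hBA, Matrix.one_mulVec]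
  have hinj : Function.Injective (A.mulVec : (Fin n → ℤ) → (Fin n → ℤ)) := by
    intro u v h
    have h2 : (fun i => ((u i : ℤ) : ℝ)) = fun i => ((v i : ℤ) : ℝ) := by
      rw [← recov u, ← recov v, h]
    funext i
    exact_mod_cast congrFun h2 i
  -- positive coefficients
  set d : Fin n → ℝ := fun i => ∑ j, (c j : ℝ) * B j i with hddef
  have hd : ∀ i, 0 < d i := by
    intro i
    have h := hc i
    have h2 : ∑ j, (c j : ℝ) * (((|A.det| : ℝ) • B) j i)
        = (|A.det| : ℝ) * d i := by
      rw [hddef, Finset.mul_sum]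
      exact Finset.sum_congr rfl fun j _ => by
        simp [Matrix.smul_apply, smul_eq_mul]; ring
    rw [h2] at h
    nlinarith
  -- key identity
  have key : ∀ v : Fin n → ℝ,
      ∑ j, (c j : ℝ) * B.mulVec v j = ∑ i, v i * d i := by
    intro v
    simp only [Matrix.mulVec, dotProduct, Finset.mul_sum]
    rw [Finset.sum_comm]
    refine Finset.sum_congr rfl fun i _ => ?_
    rw [hddef, Finset.mul_sum]
    exact Finset.sum_congr rfl fun j _ => by ring
  -- the equivalence
  let Zt := {z : Fin n → ℤ // ∀ i, A.mulVec z i ≤ b i}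
  let Yt := {y : Fin n → ℤ // (∀ i, 0 ≤ y i) ∧ ∃ z : Fin n → ℤ, b - y = A.mulVec z}
  have hchoose : ∀ y : Yt, A.mulVec (Classical.choose y.2.2) = b - y.1 :=
    fun y => (Classical.choose_spec y.2.2).symm
  let e : Zt ≃ Yt :=
    { toFun := fun z => ⟨b - A.mulVec z.1,
        ⟨fun i => by have := z.2 i; simp [Pi.sub_apply]; omega,
         ⟨z.1, by rw [sub_sub_cancel]⟩⟩⟩
      invFun := fun y => ⟨Classical.choose y.2.2, by
        intro i
        have hz := hchoose y
        have h1 : A.mulVec (Classical.choose y.2.2) i = b i - y.1 i := by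
          rw [hz]; rfl
        have := y.2.1 i
        omega⟩
      left_inv := fun z => by
        apply Subtype.ext
        apply hinj
        exact (hchoose _).trans (sub_sub_cancel _ _)
      right_inv := fun y => by
        apply Subtype.ext
        show b - A.mulVec (Classical.choose y.2.2) = y.1
        rw [hchoose y, sub_sub_cancel] }
  -- summability over Y
  set f : Yt → ℝ := fun y =>
    Real.exp (-(∑ j, (c j : ℝ) * B.mulVec (fun i => (y.1 i : ℝ)) j) * τ) with hfdef
  have hY : Summable f := by
    set r : Fin n → ℝ := fun i => Real.exp (-(d i * τ)) with hrdef
    have hr0 : ∀ i, 0 ≤ r i := fun i => (Real.exp_pos _).le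
    have hr1 : ∀ i, r i < 1 := by
      intro i
      have : -(d i * τ) < 0 := by nlinarith [hd i]
      calc r i < Real.exp 0 := Real.exp_lt_exp.2 this
        _ = 1 := Real.exp_zero
    have hF : Summable (fun q : Fin n → ℕ => ∏ i, r i ^ q i) :=
      pow_prod_summable n r hr0 hr1
    have hι : Function.Injective (fun (y : Yt) (i : Fin n) => (y.1 i).toNat) := by
      intro y y' h
      apply Subtype.ext
      funext i
      have h1 := congrFun h i
      have h2 := y.2.1 i
      have h3 := y'.2.1 i
      simp only at h1
      omega
    have := hF.comp_injective hι
    refine this.congr fun y => ?_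
    show (∏ i, r i ^ (y.1 i).toNat) = f y
    have hcast : ∀ i, (((y.1 i).toNat : ℕ) : ℝ) = ((y.1 i : ℤ) : ℝ) := by
      intro i
      have := Int.toNat_of_nonneg (y.2.1 i)
      exact_mod_cast congrArg (Int.cast : ℤ → ℝ) this
    rw [hfdef]
    simp only [key]
    have hprod : (∏ i, r i ^ (y.1 i).toNat)
        = ∏ i, Real.exp ((((y.1 i).toNat : ℕ) : ℝ) * (-(d i * τ))) :=
      Finset.prod_congr rfl fun i _ => by
        rw [hrdef]; exact (Real.exp_nat_mul _ _).symm
    rw [hprod, ← Real.exp_sum]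
    congr 1
    calc ∑ i, (((y.1 i).toNat : ℕ) : ℝ) * (-(d i * τ))
        = ∑ i, -(((y.1 i : ℤ) : ℝ) * d i * τ) :=
          Finset.sum_congr rfl fun i _ => by rw [hcast]; ring
      _ = -(∑ i, ((y.1 i : ℤ) : ℝ) * d i * τ) := Finset.sum_neg_distrib _
      _ = (-∑ i, ((y.1 i : ℤ) : ℝ) * d i) * τ := by
          rw [← Finset.sum_mul]; ring
  -- pointwise relation g z = C * f (e z)
  set C : ℝ := Real.exp ((∑ j, (c j : ℝ) *
      B.mulVec (fun i => (b i : ℝ)) j) * τ) with hCdef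
  have hpt : ∀ z : Zt,
      Real.exp ((∑ j, (c j : ℝ) * (z.1 j : ℝ)) * τ) = C * f (e z) := by
    intro z
    have hyval : ((e z).1 : Fin n → ℤ) = b - A.mulVec z.1 := rfl
    have hBsub : B.mulVec (fun i => (b i : ℝ)) - B.mulVec (fun i => (((e z).1 i : ℤ) : ℝ))
        = fun i => ((z.1 i : ℤ) : ℝ) := by
      rw [← Matrix.mulVec_sub]
      have : ((fun i => ((b i : ℤ) : ℝ)) - fun i => (((e z).1 i : ℤ) : ℝ))
          = fun i => ((A.mulVec z.1 i : ℤ) : ℝ) := by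
        funext i
        simp [hyval, Pi.sub_apply]
      rw [this, recov]
    have hsum : (∑ j, (c j : ℝ) * (z.1 j : ℝ))
        = (∑ j, (c j : ℝ) * B.mulVec (fun i => (b i : ℝ)) j)
          - (∑ j, (c j : ℝ) * B.mulVec (fun i => (((e z).1 i : ℤ) : ℝ)) j) := by
      rw [← Finset.sum_sub_distrib]
      refine Finset.sum_congr rfl fun j _ => ?_
      rw [← mul_sub]
      congr 1
      have := congrFun hBsub j
      simpa [Pi.sub_apply] using this.symm
    rw [hsum, hfdef, hCdef, ← Real.exp_add]
    congr 1
    ring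
  have hZ : Summable (fun z : Zt =>
      Real.exp ((∑ j, (c j : ℝ) * (z.1 j : ℝ)) * τ)) := by
    have h1 : Summable (f ∘ e) := e.summable_iff.2 hY
    have h2 : Summable (fun z : Zt => C * f (e z)) := h1.mul_left C
    exact h2.congr fun z => (hpt z).symm
  refine ⟨hZ, hY, ?_⟩
  calc (∑' z : Zt, Real.exp ((∑ j, (c j : ℝ) * (z.1 j : ℝ)) * τ))
      = ∑' z : Zt, C * f (e z) := tsum_congr hpt
    _ = C * ∑' z : Zt, f (e z) := tsum_mul_left
    _ = C * ∑' y : Yt, f y := by rw [e.tsum_eq f]
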